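/- Let K be a field and let O₂ ⊊ O₁ be two valuation subrings of K, with maximal ideals M₁ and M₂ respectively. Let A be an ideal of O₂ whose radical equals M₂. Then M₁ is strictly contained in A. -/

import Mathlib

theorem maximalIdeal_lt_ideal_of_radical_eq
    {K : Type*} [Field K] (O₁ O₂ : ValuationSubring K) (h : O₂ < O₁)
    (A : Ideal O₂) (hA : A.radical = IsLocalRing.maximalIdeal O₂) :
    (Subtype.val '' ((IsLocalRing.maximalIdeal O₁ : Ideal O₁) : Set O₁) : Set K)
      ⊂ (Subtype.val '' ((A : Ideal O₂) : Set O₂) : Set K) := by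
  obtain ⟨hle, y, hy1, hy2⟩ := SetLike.lt_iff_le_and_exists.mp h
  have hy0 : y ≠ 0 := fun hy => hy2 (hy ▸ O₂.zero_mem)
  have hyinv : y⁻¹ ∈ O₂ := (O₂.mem_or_inv_mem y).resolve_left hy2
  -- y⁻¹ is a nonunit of O₂
  have hM2 : (⟨y⁻¹, hyinv⟩ : O₂) ∈ IsLocalRing.maximalIdeal O₂ := by
    rw [IsLocalRing.mem_maximalIdeal]
    intro hu
    apply hy2
    obtain ⟨c, hc⟩ := isUnit_iff_exists_inv.mp hu
    have hval : y⁻¹ * (c : K) = 1 := congrArg Subtype.val hc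
    have : (c : K) = y := by
      field_simp at hval
      exact hval
    exact this ▸ c.2
  -- get z = (y⁻¹)^n ∈ A
  rw [← hA] at hM2
  obtain ⟨n, hzA⟩ := hM2
  set z : O₂ := (⟨y⁻¹, hyinv⟩ : O₂) ^ n with hz
  -- z.val = y⁻¹ ^ n is not in the image of M₁
  have hzval : (z : K) = (y⁻¹) ^ n := rfl
  have hznM1 : (z : K) ∉ (Subtype.val '' ((IsLocalRing.maximalIdeal O₁ : Ideal O₁) : Set O₁) : Set K) := by
    rintro ⟨w, hw, hwval⟩
    have hw' : ¬ IsUnit w := hw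
    apply hw'
    refine IsUnit.of_mul_eq_one (a := w) ⟨y ^ n, pow_mem hy1 n⟩ ?_
    apply Subtype.ext
    show (w : K) * y ^ n = 1
    rw [hwval, hzval, inv_pow]
    field_simp
  constructor
  · -- M₁ ⊆ A as subsets of K
    rintro x ⟨w, hw, rfl⟩
    have hxO2 : (w : K) ∈ O₂ := by
      by_contra hx
      have hxinv : (w : K)⁻¹ ∈ O₂ := (O₂.mem_or_inv_mem _).resolve_left hx
      have hx0 : (w : K) ≠ 0 := fun h0 => hx (h0 ▸ O₂.zero_mem)
      have hw' : ¬ IsUnit w := hw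
      apply hw'
      refine IsUnit.of_mul_eq_one (a := w) ⟨(w : K)⁻¹, hle hxinv⟩ ?_
      apply Subtype.ext
      show (w : K) * (w : K)⁻¹ = 1
      field_simp
    refine ⟨⟨(w : K), hxO2⟩, ?_, rfl⟩
    -- comparability in O₂
    obtain ⟨c, hc | hc⟩ := ValuationRing.cond (⟨(w : K), hxO2⟩ : O₂) z
    · -- w * c = z : then z ∈ M₁, contradiction
      exfalso
      apply hznM1
      refine ⟨w * ⟨(c : K), hle c.2⟩, Ideal.mul_mem_right _ _ hw, ?_⟩
      have := congrArg Subtype.val hc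
      exact this
    · -- z * c = w : then w ∈ A
      have : (⟨(w : K), hxO2⟩ : O₂) = z * c := hc.symm
      rw [this]
      exact Ideal.mul_mem_right _ _ hzA
  · -- strictness via z
    intro hsub
    exact hznM1 (hsub ⟨z, hzA, rfl⟩)
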